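/- Let x ≥ 1 be a real number. The open interval (x, 2x) contains the order of some Hadamard matrix if and only if x ∉ {1, 2, 4}. -/

import Mathlib

/-- An `n × n` real matrix is a Hadamard matrix if every entry is `±1` and
`H * Hᵀ = n • 1`. -/
def IsHadamardMatrix {n : ℕ} (H : Matrix (Fin n) (Fin n) ℝ) : Prop :=
  (∀ i j, H i j = 1 ∨ H i j = -1) ∧ H * H.transpose = (n : ℝ) • 1

namespace Statement19Aux

open Matrix Kronecker

def HadOrder (n : ℕ) : Prop := ∃ H : Matrix (Fin n) (Fin n) ℝ, IsHadamardMatrix H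

def Hz12 : Matrix (Fin 12) (Fin 12) ℤ :=
  !![1, 1, 1, 1, 1, 1, 1, 1, 1, 1, 1, 1;
     1, -1, -1, 1, -1, -1, -1, 1, 1, 1, -1, 1;
     1, 1, -1, -1, 1, -1, -1, -1, 1, 1, 1, -1;
     1, -1, 1, -1, -1, 1, -1, -1, -1, 1, 1, 1;
     1, 1, -1, 1, -1, -1, 1, -1, -1, -1, 1, 1;
     1, 1, 1, -1, 1, -1, -1, 1, -1, -1, -1, 1;
     1, 1, 1, 1, -1, 1, -1, -1, 1, -1, -1, -1;
     1, -1, 1, 1, 1, -1, 1, -1, -1, 1, -1, -1;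
     1, -1, -1, 1, 1, 1, -1, 1, -1, -1, 1, -1;
     1, -1, -1, -1, 1, 1, 1, -1, 1, -1, -1, 1;
     1, 1, -1, -1, -1, 1, 1, 1, -1, 1, -1, -1;
     1, -1, 1, -1, -1, -1, 1, 1, 1, -1, 1, -1]

lemma had12 : HadOrder 12 := by
  refine ⟨Hz12.map (Int.cast : ℤ → ℝ), ?_, ?_⟩
  · intro i j
    have h : Hz12 i j = 1 ∨ Hz12 i j = -1 := by fin_cases i <;> fin_cases j <;> decide
    rcases h with h | h <;> simp [Matrix.map_apply, h]
  · have h : Hz12 * Hz12.transpose = (12 : ℤ) • 1 := by decide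
    ext i j
    have h' := congrFun (congrFun h i) j
    simp only [Matrix.mul_apply, Matrix.transpose_apply, Matrix.smul_apply, Matrix.one_apply,
      smul_eq_mul, mul_ite, mul_one, mul_zero] at h'
    simp only [Matrix.mul_apply, Matrix.transpose_apply, Matrix.map_apply, Matrix.smul_apply,
      Matrix.one_apply, smul_eq_mul, mul_ite, mul_one, mul_zero]
    calc ∑ k, ((Hz12 i k : ℝ) * (Hz12 j k : ℝ))
        = ((∑ k, Hz12 i k * Hz12 j k : ℤ) : ℝ) := by push_cast; rfl
      _ = _ := by rw [h']; split <;> norm_num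

lemma had1 : HadOrder 1 := by
  refine ⟨1, ?_, ?_⟩
  · intro i j
    left
    fin_cases i; fin_cases j; simp [Matrix.one_apply]
  · ext i j; fin_cases i; fin_cases j; simp [Matrix.mul_apply]

lemma had2 : HadOrder 2 := by
  refine ⟨!![1, 1; 1, -1], ?_, ?_⟩
  · intro i j
    fin_cases i <;> fin_cases j <;> norm_num
  · ext i j
    fin_cases i <;> fin_cases j <;>
      norm_num [Matrix.mul_apply, Fin.sum_univ_two, Matrix.one_apply, Matrix.vecHead,
        Matrix.vecTail, Matrix.transpose_apply]

lemma had_mul {m n : ℕ} (hm : HadOrder m) (hn : HadOrder n) : HadOrder (m * n) := by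
  obtain ⟨A, hA1, hA2⟩ := hm
  obtain ⟨B, hB1, hB2⟩ := hn
  refine ⟨Matrix.reindex finProdFinEquiv finProdFinEquiv (A ⊗ₖ B), ?_, ?_⟩
  · intro i j
    rw [Matrix.reindex_apply, Matrix.submatrix_apply, Matrix.kroneckerMap_apply]
    rcases hA1 (finProdFinEquiv.symm i).1 (finProdFinEquiv.symm j).1 with h1 | h1 <;>
    rcases hB1 (finProdFinEquiv.symm i).2 (finProdFinEquiv.symm j).2 with h2 | h2 <;>
      rw [h1, h2] <;> norm_num
  · rw [Matrix.reindex_apply, Matrix.transpose_submatrix, Matrix.submatrix_mul_equiv,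
      ← Matrix.kroneckerMap_transpose, ← Matrix.mul_kronecker_mul, hA2, hB2,
      Matrix.smul_kronecker, Matrix.kronecker_smul, Matrix.one_kronecker_one, smul_smul]
    ext i j
    simp only [Matrix.submatrix_apply, Matrix.smul_apply, Matrix.one_apply, smul_eq_mul,
      EmbeddingLike.apply_eq_iff_eq]
    push_cast
    by_cases hij : i = j <;> simp [hij]

lemma had_pow (k : ℕ) : HadOrder (2 ^ k) := by
  induction k with
  | zero => simpa using had1
  | succ k ih => rw [pow_succ, mul_comm]; exact had_mul had2 ih

lemma had_3pow {k : ℕ} (hk : 2 ≤ k) : HadOrder (3 * 2 ^ k) := by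
  obtain ⟨j, rfl⟩ := Nat.exists_eq_add_of_le hk
  have : 3 * 2 ^ (2 + j) = 12 * 2 ^ j := by ring
  rw [this]
  exact had_mul had12 (had_pow j)

/-- sign as an integer -/
noncomputable def isign {n : ℕ} (H : Matrix (Fin n) (Fin n) ℝ) (i j : Fin n) : ℤ :=
  if H i j = 1 then 1 else -1

lemma isign_cast {n : ℕ} {H : Matrix (Fin n) (Fin n) ℝ}
    (hH : ∀ i j, H i j = 1 ∨ H i j = -1) (i j : Fin n) :
    ((isign H i j : ℤ) : ℝ) = H i j := by
  rcases hH i j with h | h <;> norm_num [isign, h]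

lemma isign_pm {n : ℕ} (H : Matrix (Fin n) (Fin n) ℝ) (i j : Fin n) :
    isign H i j = 1 ∨ isign H i j = -1 := by
  unfold isign; split <;> simp

lemma dot_eq {n : ℕ} {H : Matrix (Fin n) (Fin n) ℝ}
    (hH : H * H.transpose = (n : ℝ) • 1) (i k : Fin n) :
    ∑ j, H i j * H k j = if i = k then (n : ℝ) else 0 := by
  have := congrFun (congrFun hH i) k
  simpa [Matrix.mul_apply, Matrix.smul_apply, Matrix.one_apply, Matrix.transpose_apply,
    mul_ite] using this

lemma four_dvd {n : ℕ} (hn : 3 ≤ n) (h : HadOrder n) : 4 ∣ n := by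
  obtain ⟨H, hH1, hH2⟩ := h
  set i0 : Fin n := ⟨0, by omega⟩
  set i1 : Fin n := ⟨1, by omega⟩
  set i2 : Fin n := ⟨2, by omega⟩
  have h01 : i0 ≠ i1 := by simp [i0, i1, Fin.ext_iff]
  have h02 : i0 ≠ i2 := by simp [i0, i2, Fin.ext_iff]
  have h12 : i1 ≠ i2 := by simp [i1, i2, Fin.ext_iff]
  set S : ℤ := ∑ j, (isign H i0 j + isign H i1 j) * (isign H i0 j + isign H i2 j) with hS
  have hcast : ((S : ℤ) : ℝ) = (n : ℝ) := by
    push_cast [hS]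
    simp only [isign_cast hH1]
    have expand : ∀ j : Fin n, (H i0 j + H i1 j) * (H i0 j + H i2 j)
        = H i0 j * H i0 j + H i0 j * H i2 j + H i1 j * H i0 j + H i1 j * H i2 j := by
      intro j; ring
    rw [Finset.sum_congr rfl (fun j _ => expand j)]
    rw [Finset.sum_add_distrib, Finset.sum_add_distrib, Finset.sum_add_distrib]
    rw [dot_eq hH2 i0 i0, dot_eq hH2 i0 i2, dot_eq hH2 i1 i0, dot_eq hH2 i1 i2]
    simp [h01.symm, h02, h12]
  have hSn : S = (n : ℤ) := by exact_mod_cast hcast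
  have hdvd : (4 : ℤ) ∣ S := by
    apply Finset.dvd_sum
    intro j _
    rcases isign_pm H i0 j with h1 | h1 <;> rcases isign_pm H i1 j with h2 | h2 <;>
      rcases isign_pm H i2 j with h3 | h3 <;> rw [h1, h2, h3] <;> decide
  rw [hSn] at hdvd
  exact_mod_cast hdvd

end Statement19Aux

open Statement19Aux in
/-- Let `x ≥ 1` be a real number. The open interval `(x, 2x)` contains
the order of some Hadamard matrix if and only if `x ∉ {1, 2, 4}`. -/
theorem statement19 (x : ℝ) (hx : 1 ≤ x) :
    (∃ n : ℕ, (∃ H : Matrix (Fin n) (Fin n) ℝ, IsHadamardMatrix H) ∧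
      x < (n : ℝ) ∧ (n : ℝ) < 2 * x) ↔ x ∉ ({1, 2, 4} : Set ℝ) := by
  constructor
  · rintro ⟨n, hHad, hlt1, hlt2⟩ hmem
    simp only [Set.mem_insert_iff, Set.mem_singleton_iff] at hmem
    rcases hmem with rfl | rfl | rfl
    · -- x = 1 : 1 < n < 2 impossible
      have h1 : 1 < n := by exact_mod_cast hlt1
      have h2 : (n : ℝ) < 2 := by linarith
      have : n < 2 := by exact_mod_cast h2
      omega
    · -- x = 2 : n = 3
      have h1 : 2 < n := by exact_mod_cast hlt1
      have h2 : (n : ℝ) < 4 := by linarith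
      have h2' : n < 4 := by exact_mod_cast h2
      have : n = 3 := by omega
      subst this
      have := four_dvd (by norm_num) hHad
      omega
    · -- x = 4 : n ∈ {5,6,7}
      have h1 : 4 < n := by exact_mod_cast hlt1
      have h2 : (n : ℝ) < 8 := by linarith
      have h2' : n < 8 := by exact_mod_cast h2
      have := four_dvd (by omega) hHad
      omega
  · intro hmem
    simp only [Set.mem_insert_iff, Set.mem_singleton_iff, not_or] at hmem
    obtain ⟨hx1, hx2, hx4⟩ := hmem
    have hx1' : 1 < x := lt_of_le_of_ne hx (Ne.symm hx1)
    by_cases h2 : x < 2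
    · exact ⟨2, had2, by exact_mod_cast h2, by push_cast; linarith⟩
    push_neg at h2
    have hx2' : 2 < x := lt_of_le_of_ne h2 (Ne.symm hx2)
    by_cases h4 : x < 4
    · exact ⟨4, had_pow 2, by exact_mod_cast h4, by push_cast; linarith⟩
    push_neg at h4
    have hx4' : 4 < x := lt_of_le_of_ne h4 (Ne.symm hx4)
    -- now x > 4; find k with 2^k ≤ x < 2^(k+1), k ≥ 2
    set m := Nat.log 2 ⌊x⌋₊ with hm
    have hx0 : (0:ℝ) < x := by linarith
    have hfl4 : 4 ≤ ⌊x⌋₊ := by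
      have := Nat.le_floor (by exact_mod_cast h4 : ((4:ℕ):ℝ) ≤ x)
      exact this
    have hlow : (2:ℝ) ^ m ≤ x := by
      have h1 : 2 ^ m ≤ ⌊x⌋₊ := Nat.pow_log_le_self 2 (by omega)
      calc (2:ℝ) ^ m = ((2 ^ m : ℕ) : ℝ) := by push_cast; ring
        _ ≤ (⌊x⌋₊ : ℝ) := by exact_mod_cast h1
        _ ≤ x := Nat.floor_le (le_of_lt hx0)
    have hhigh : x < (2:ℝ) ^ (m + 1) := by
      have h1 : ⌊x⌋₊ < 2 ^ (m + 1) := Nat.lt_pow_succ_log_self (by norm_num) _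
      have h2' : x < (⌊x⌋₊ : ℝ) + 1 := Nat.lt_floor_add_one x
      have : (⌊x⌋₊ : ℝ) + 1 ≤ ((2 ^ (m+1) : ℕ) : ℝ) := by exact_mod_cast h1
      calc x < (⌊x⌋₊ : ℝ) + 1 := h2'
        _ ≤ ((2 ^ (m+1) : ℕ) : ℝ) := this
        _ = (2:ℝ) ^ (m+1) := by push_cast; ring
    have hm2 : 2 ≤ m := by
      have : 2 ^ 2 ≤ ⌊x⌋₊ := by omega
      exact (Nat.le_log_iff_pow_le (by norm_num) (by omega)).mpr this
    by_cases heq : (2:ℝ) ^ m < x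
    · -- take 2^(m+1)
      refine ⟨2 ^ (m + 1), had_pow (m + 1), ?_, ?_⟩
      · push_cast; exact hhigh
      · push_cast
        calc (2:ℝ) ^ (m + 1) = 2 * 2 ^ m := by ring
          _ < 2 * x := by linarith
    · push_neg at heq
      have hxeq : x = (2:ℝ) ^ m := le_antisymm heq hlow
      -- x = 2^m, m ≥ 3 since x ≠ 4
      have hm3 : 3 ≤ m := by
        rcases Nat.lt_or_ge m 3 with h | h
        · interval_cases m
          · norm_num at hxeq; exact absurd hxeq hx4
        · exact h
      refine ⟨3 * 2 ^ (m - 1), had_3pow (by omega), ?_, ?_⟩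
      · rw [hxeq]
        push_cast
        have : (2:ℝ) ^ m = 2 * 2 ^ (m - 1) := by
          rw [← pow_succ']
          congr 1
          omega
        rw [this]
        have hp : (0:ℝ) < 2 ^ (m - 1) := by positivity
        linarith
      · rw [hxeq]
        push_cast
        have : (2:ℝ) ^ m = 2 * 2 ^ (m - 1) := by
          rw [← pow_succ']; congr 1; omega
        rw [this]
        have hp : (0:ℝ) < 2 ^ (m - 1) := by positivity
        linarith
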